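/- Let σ be a relational vocabulary with symbols of arity at most 2, (𝒜,a) and (ℬ,b) pointed Kripke structures, and k ≥ 0. Then a ∼^g_k b if and only if there exist morphisms of pointed structures f : M_k(𝒜,a) → (ℬ,b) and g : M_k(ℬ,b) → (𝒜,a) which are mutually inverse in the coKleisli category, i.e., g ∘ f* = ε_{(𝒜,a)} and f ∘ g* = ε_{(ℬ,b)}. -/

import Mathlib

/-- A modal vocabulary: unary symbols (propositional variables) and binary symbols
(modalities); a relational vocabulary with symbols of arity at most 2. -/
structure ModalVocab : Type 1 where
  Prp : Type
  Act : Type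

/-- A Kripke structure for a modal vocabulary. -/
structure Kripke (V : ModalVocab) : Type 1 where
  carrier : Type
  unary : V.Prp → carrier → Prop
  rel : V.Act → carrier → carrier → Prop

/-- A homomorphism of Kripke structures. -/
def IsKHom {V : ModalVocab} (𝒜 ℬ : Kripke V) (h : 𝒜.carrier → ℬ.carrier) : Prop :=
  (∀ P x, 𝒜.unary P x → ℬ.unary P (h x)) ∧
  (∀ α x y, 𝒜.rel α x y → ℬ.rel α (h x) (h y))

/-- A morphism of pointed Kripke structures. -/
def IsPKHom {V : ModalVocab} (𝒜 : Kripke V) (a : 𝒜.carrier) (ℬ : Kripke V)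
    (b : ℬ.carrier) (h : 𝒜.carrier → ℬ.carrier) : Prop :=
  IsKHom 𝒜 ℬ h ∧ h a = b

/-- `chainFrom 𝒜 x l` : the list `l = [(α₁,a₁),…,(αⱼ,aⱼ)]` is a path of transitions
starting at `x`, i.e. `x →^{α₁} a₁ →^{α₂} ⋯ →^{αⱼ} aⱼ`. -/
def chainFrom {V : ModalVocab} (𝒜 : Kripke V) : 𝒜.carrier → List (V.Act × 𝒜.carrier) → Prop
  | _, [] => True
  | x, (α, y) :: l => 𝒜.rel α x y ∧ chainFrom 𝒜 y l

/-- The last element of a path starting at `x`. -/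
def lastFrom {V : ModalVocab} (𝒜 : Kripke V) : 𝒜.carrier → List (V.Act × 𝒜.carrier) → 𝒜.carrier
  | x, [] => x
  | _, (_, y) :: l => lastFrom 𝒜 y l

theorem chainFrom_take {V : ModalVocab} (𝒜 : Kripke V)
    (l : List (V.Act × 𝒜.carrier)) :
    ∀ (x : 𝒜.carrier) (n : ℕ), chainFrom 𝒜 x l → chainFrom 𝒜 x (l.take n) := by
  induction l with
  | nil => intro x n h; simpa using h
  | cons p l ih =>
    intro x n h
    cases n with
    | zero => simp [chainFrom]
    | succ n =>
      obtain ⟨α, y⟩ := p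
      exact ⟨h.1, ih y n h.2⟩

/-- The universe of `M_k (𝒜, a)`: a sequence `[a, α₁, a₁, …, αⱼ, aⱼ]` with `j ≤ k`
which is a path of transitions from `a`, represented by its list of steps. -/
def MkC {V : ModalVocab} (𝒜 : Kripke V) (a : 𝒜.carrier) (k : ℕ) : Type :=
  {l : List (V.Act × 𝒜.carrier) // l.length ≤ k ∧ chainFrom 𝒜 a l}

/-- The distinguished element `[a]` of `M_k (𝒜, a)`. -/
def mpt {V : ModalVocab} (𝒜 : Kripke V) (a : 𝒜.carrier) (k : ℕ) : MkC 𝒜 a k :=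
  ⟨[], Nat.zero_le k, trivial⟩

/-- The counit: the last element of a sequence. -/
def meps {V : ModalVocab} {𝒜 : Kripke V} {a : 𝒜.carrier} {k : ℕ} (s : MkC 𝒜 a k) :
    𝒜.carrier :=
  lastFrom 𝒜 a s.1

/-- The modal comonad: the Kripke structure `M_k (𝒜, a)`. -/
def MkS {V : ModalVocab} (𝒜 : Kripke V) (a : 𝒜.carrier) (k : ℕ) : Kripke V where
  carrier := MkC 𝒜 a k
  unary P s := 𝒜.unary P (meps s)
  rel α s t := ∃ a', t.1 = s.1 ++ [(α, a')]

/-- The prefix of `s` of length `i+1`. -/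
def mPrefAt {V : ModalVocab} {𝒜 : Kripke V} {a : 𝒜.carrier} {k : ℕ} (s : MkC 𝒜 a k)
    (i : Fin s.1.length) : MkC 𝒜 a k :=
  ⟨s.1.take (i + 1),
    le_trans (by rw [List.length_take]; exact min_le_right _ _) s.2.1,
    chainFrom_take 𝒜 s.1 a (i + 1) s.2.2⟩

/-- `F` is the Kleisli coextension of `f`, i.e. `F` is the map `f*` determined by
`f*[a] = [b]` and `f*(s[α,a']) = f*(s)[α, f(s[α,a'])]`. -/
def IsMCoext {V : ModalVocab} {𝒜 ℬ : Kripke V} {a : 𝒜.carrier} {b : ℬ.carrier} {k : ℕ}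
    (f : MkC 𝒜 a k → ℬ.carrier) (F : MkC 𝒜 a k → MkC ℬ b k) : Prop :=
  ∀ s, (F s).1 = List.ofFn (fun i : Fin s.1.length => ((s.1.get i).1, f (mPrefAt s i)))

/-- The graded bisimulation approximants `a ∼^g_k b`. -/
def gBis {V : ModalVocab} (𝒜 ℬ : Kripke V) : ℕ → 𝒜.carrier → ℬ.carrier → Prop
  | 0, a, b => ∀ P, 𝒜.unary P a ↔ ℬ.unary P b
  | k + 1, a, b =>
    (∀ P, 𝒜.unary P a ↔ ℬ.unary P b) ∧
    (∀ α, ∃ θ : {a' // 𝒜.rel α a a'} ≃ {b' // ℬ.rel α b b'},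
      ∀ a' : {a' // 𝒜.rel α a a'}, gBis 𝒜 ℬ k a'.1 (θ a').1)

section Stmt17Aux

open List

variable {V : ModalVocab} {𝒜 ℬ : Kripke V}

theorem chainFrom_append' (l : List (V.Act × 𝒜.carrier)) :
    ∀ (x : 𝒜.carrier) (α : V.Act) (y : 𝒜.carrier),
      chainFrom 𝒜 x (l ++ [(α, y)]) ↔ chainFrom 𝒜 x l ∧ 𝒜.rel α (lastFrom 𝒜 x l) y := by
  induction l with
  | nil => intro x α y; simp [chainFrom, lastFrom]
  | cons p l ih =>
    intro x α y
    obtain ⟨β, z⟩ := p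
    simp [chainFrom, lastFrom, ih, and_assoc]

theorem lastFrom_append' (l : List (V.Act × 𝒜.carrier)) :
    ∀ (x : 𝒜.carrier) (α : V.Act) (y : 𝒜.carrier),
      lastFrom 𝒜 x (l ++ [(α, y)]) = y := by
  induction l with
  | nil => intro x α y; rfl
  | cons p l ih => intro x α y; obtain ⟨β, z⟩ := p; simpa [lastFrom] using ih z α y

theorem lastFrom_take' (l : List (V.Act × 𝒜.carrier)) :
    ∀ (x : 𝒜.carrier) (i : ℕ) (h : i < l.length),
      lastFrom 𝒜 x (l.take (i + 1)) = (l[i]'h).2 := by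
  induction l with
  | nil => intro x i h; simp at h
  | cons p l ih =>
    intro x i h
    obtain ⟨β, z⟩ := p
    cases i with
    | zero =>
      cases l <;> simp [lastFrom]
    | succ i => simpa [lastFrom] using ih z i (by simpa using h)

theorem gBis_unary {m : ℕ} {x : 𝒜.carrier} {y : ℬ.carrier} (h : gBis 𝒜 ℬ m x y) :
    ∀ P, 𝒜.unary P x ↔ ℬ.unary P y := by
  cases m with
  | zero => exact h
  | succ m => exact h.1

theorem gBis_succ {m : ℕ} {x : 𝒜.carrier} {y : ℬ.carrier} :
    gBis 𝒜 ℬ (m + 1) x y ↔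
      ((∀ P, 𝒜.unary P x ↔ ℬ.unary P y) ∧
       (∀ α, ∃ θ : {a' // 𝒜.rel α x a'} ≃ {b' // ℬ.rel α y b'},
          ∀ a' : {a' // 𝒜.rel α x a'}, gBis 𝒜 ℬ m a'.1 (θ a').1)) := Iff.rfl

/-- snoc for `MkC`. -/
def msnoc {a : 𝒜.carrier} {k : ℕ} (s : MkC 𝒜 a k) (α : V.Act) (x' : 𝒜.carrier)
    (hlen : s.1.length < k) (hrel : 𝒜.rel α (meps s) x') : MkC 𝒜 a k :=
  ⟨s.1 ++ [(α, x')],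
    by simp only [List.length_append, List.length_singleton]; omega,
    (chainFrom_append' _ _ _ _).mpr ⟨s.2.2, hrel⟩⟩

@[simp] theorem msnoc_val {a : 𝒜.carrier} {k : ℕ} (s : MkC 𝒜 a k) (α x' h1 h2) :
    (msnoc s α x' h1 h2).1 = s.1 ++ [(α, x')] := rfl

theorem meps_msnoc {a : 𝒜.carrier} {k : ℕ} (s : MkC 𝒜 a k) (α x' h1 h2) :
    meps (msnoc s α x' h1 h2) = x' := lastFrom_append' _ _ _ _

theorem rel_msnoc {a : 𝒜.carrier} {k : ℕ} (s : MkC 𝒜 a k) (α x' h1 h2) :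
    (MkS 𝒜 a k).rel α s (msnoc s α x' h1 h2) := ⟨x', rfl⟩

/-- The underlying list of the coextension. -/
def coextList {a : 𝒜.carrier} {k : ℕ}
    (f : MkC 𝒜 a k → ℬ.carrier) (s : MkC 𝒜 a k) : List (V.Act × ℬ.carrier) :=
  List.ofFn (fun i : Fin s.1.length => ((s.1.get i).1, f (mPrefAt s i)))

theorem isMCoext_iff {a : 𝒜.carrier} {b : ℬ.carrier} {k : ℕ}
    (f : MkC 𝒜 a k → ℬ.carrier) (F : MkC 𝒜 a k → MkC ℬ b k) :
    IsMCoext f F ↔ ∀ s, (F s).1 = coextList f s := Iff.rfl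

@[simp] theorem coextList_length {a : 𝒜.carrier} {k : ℕ}
    (f : MkC 𝒜 a k → ℬ.carrier) (s : MkC 𝒜 a k) :
    (coextList f s).length = s.1.length := by simp [coextList]

theorem coextList_nil {a : 𝒜.carrier} {k : ℕ}
    (f : MkC 𝒜 a k → ℬ.carrier) (s : MkC 𝒜 a k) (h : s.1 = []) :
    coextList f s = [] :=
  List.length_eq_zero_iff.mp (by simp [h])

theorem coextList_snoc {a : 𝒜.carrier} {k : ℕ}
    (f : MkC 𝒜 a k → ℬ.carrier) (s t : MkC 𝒜 a k) (α : V.Act) (x' : 𝒜.carrier)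
    (h : t.1 = s.1 ++ [(α, x')]) :
    coextList f t = coextList f s ++ [(α, f t)] := by
  have hlen : t.1.length = s.1.length + 1 := by rw [h]; simp
  apply List.ext_getElem (by simp [hlen])
  intro n h1 h2
  have h1' : n < t.1.length := by simpa using h1
  simp only [coextList, List.getElem_ofFn]
  by_cases hn : n < s.1.length
  · rw [List.getElem_append_left (by simpa using hn)]
    simp only [coextList, List.getElem_ofFn]
    have e1 : t.1.get ⟨n, by simpa using h1⟩ = s.1.get ⟨n, hn⟩ := by
      simp only [List.get_eq_getElem]
      rw [List.getElem_of_eq h]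
      exact List.getElem_append_left hn
    have e2 : mPrefAt t ⟨n, by simpa using h1⟩ = mPrefAt s ⟨n, hn⟩ := Subtype.ext (by
      show t.1.take (n + 1) = s.1.take (n + 1)
      rw [h, List.take_append_of_le_length (by omega)])
    rw [e1, e2]
  · have hn' : n = s.1.length := by omega
    subst hn'
    rw [List.getElem_concat_length (by simp)]
    have e1 : t.1.get ⟨s.1.length, by simpa using h1⟩ = (α, x') := by
      simp only [List.get_eq_getElem]
      rw [List.getElem_of_eq h]
      exact List.getElem_concat_length rfl _
    have e2 : mPrefAt t ⟨s.1.length, by simpa using h1⟩ = t := Subtype.ext (by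
      show t.1.take (s.1.length + 1) = t.1
      rw [← hlen, List.take_length])
    rw [e1, e2]

/-- Split off the last step of an `MkC` element. -/
theorem msnoc_elim {a : 𝒜.carrier} {k : ℕ} (s : MkC 𝒜 a k) (hs : s.1 ≠ []) :
    ∃ (s' : MkC 𝒜 a k) (α : V.Act) (x' : 𝒜.carrier),
      s.1 = s'.1 ++ [(α, x')] ∧ s'.1.length + 1 = s.1.length := by
  obtain h | ⟨L, ⟨α, x'⟩, hL⟩ := List.eq_nil_or_concat s.1
  · exact absurd h hs
  · rw [List.concat_eq_append] at hL
    have hlen : L.length ≤ k := by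
      have := s.2.1; rw [hL] at this; simp at this; omega
    have hch : chainFrom 𝒜 a L := ((chainFrom_append' _ _ _ _).mp (hL ▸ s.2.2)).1
    exact ⟨⟨L, hlen, hch⟩, α, x', hL, by rw [hL]; simp⟩

theorem coext_last {a : 𝒜.carrier} {b : ℬ.carrier} {k : ℕ}
    (f : MkC 𝒜 a k → ℬ.carrier) (hpt : f (mpt 𝒜 a k) = b) :
    ∀ (n : ℕ) (s : MkC 𝒜 a k), s.1.length = n → lastFrom ℬ b (coextList f s) = f s := by
  intro n
  induction n with
  | zero =>
    intro s hs
    have hnil : s.1 = [] := List.length_eq_zero_iff.mp hs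
    have : s = mpt 𝒜 a k := Subtype.ext hnil
    rw [coextList_nil f s hnil, this, hpt]; rfl
  | succ n ih =>
    intro s hs
    obtain ⟨s', α, x', hL, hlen⟩ := msnoc_elim s (by intro h; rw [h] at hs; simp at hs)
    rw [coextList_snoc f s' s α x' hL, lastFrom_append']

theorem coext_last' {a : 𝒜.carrier} {b : ℬ.carrier} {k : ℕ}
    (f : MkC 𝒜 a k → ℬ.carrier) (hpt : f (mpt 𝒜 a k) = b) (s : MkC 𝒜 a k) :
    lastFrom ℬ b (coextList f s) = f s :=
  coext_last f hpt s.1.length s rfl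

theorem coext_chain {a : 𝒜.carrier} {b : ℬ.carrier} {k : ℕ}
    (f : MkC 𝒜 a k → ℬ.carrier) (hf : IsPKHom (MkS 𝒜 a k) (mpt 𝒜 a k) ℬ b f) :
    ∀ (n : ℕ) (s : MkC 𝒜 a k), s.1.length = n → chainFrom ℬ b (coextList f s) := by
  intro n
  induction n with
  | zero =>
    intro s hs
    rw [coextList_nil f s (List.length_eq_zero_iff.mp hs)]
    trivial
  | succ n ih =>
    intro s hs
    obtain ⟨s', α, x', hL, hlen⟩ := msnoc_elim s (by intro h; rw [h] at hs; simp at hs)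
    rw [coextList_snoc f s' s α x' hL]
    refine (chainFrom_append' _ _ _ _).mpr ⟨ih s' (by omega), ?_⟩
    rw [coext_last' f hf.2 s']
    exact hf.1.2 α s' s ⟨x', hL⟩

/-- The coextension of a pointed morphism. -/
def coextF {a : 𝒜.carrier} {b : ℬ.carrier} {k : ℕ}
    (f : MkC 𝒜 a k → ℬ.carrier) (hf : IsPKHom (MkS 𝒜 a k) (mpt 𝒜 a k) ℬ b f) :
    MkC 𝒜 a k → MkC ℬ b k := fun s =>
  ⟨coextList f s, by rw [coextList_length]; exact s.2.1, coext_chain f hf s.1.length s rfl⟩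

theorem coextF_isMCoext {a : 𝒜.carrier} {b : ℬ.carrier} {k : ℕ}
    (f : MkC 𝒜 a k → ℬ.carrier) (hf : IsPKHom (MkS 𝒜 a k) (mpt 𝒜 a k) ℬ b f) :
    IsMCoext f (coextF f hf) := fun _ => rfl

theorem mcoext_length {a : 𝒜.carrier} {b : ℬ.carrier} {k : ℕ}
    {f : MkC 𝒜 a k → ℬ.carrier} {F : MkC 𝒜 a k → MkC ℬ b k}
    (hF : IsMCoext f F) (s : MkC 𝒜 a k) : (F s).1.length = s.1.length := by
  rw [hF s]; simp

theorem mcoext_snoc {a : 𝒜.carrier} {b : ℬ.carrier} {k : ℕ}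
    {f : MkC 𝒜 a k → ℬ.carrier} {F : MkC 𝒜 a k → MkC ℬ b k}
    (hF : IsMCoext f F) (s t : MkC 𝒜 a k) (α : V.Act) (x' : 𝒜.carrier)
    (h : t.1 = s.1 ++ [(α, x')]) : (F t).1 = (F s).1 ++ [(α, f t)] := by
  rw [hF t, hF s]; exact coextList_snoc f s t α x' h

theorem mcoext_meps {a : 𝒜.carrier} {b : ℬ.carrier} {k : ℕ}
    {f : MkC 𝒜 a k → ℬ.carrier} {F : MkC 𝒜 a k → MkC ℬ b k}
    (hF : IsMCoext f F) (hpt : f (mpt 𝒜 a k) = b) (s : MkC 𝒜 a k) :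
    meps (F s) = f s := by
  show lastFrom ℬ b (F s).1 = f s
  rw [hF s]; exact coext_last' f hpt s

theorem coextList_pref {a : 𝒜.carrier} {k : ℕ}
    (f : MkC 𝒜 a k → ℬ.carrier) (s : MkC 𝒜 a k) (i : Fin s.1.length) :
    coextList f (mPrefAt s i) = (coextList f s).take ((i : ℕ) + 1) := by
  apply List.ext_getElem (by rw [coextList_length, List.length_take, coextList_length]; simp [mPrefAt, List.length_take])
  intro n h1 h2
  have hlen : (mPrefAt s i).1.length = min ((i : ℕ) + 1) s.1.length := by
    simp [mPrefAt, List.length_take]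
  have hn : n < s.1.length ∧ n < i + 1 := by
    have := h1; rw [coextList_length, hlen] at this; omega
  rw [List.getElem_take]
  simp only [coextList, List.getElem_ofFn]
  have e1 : (mPrefAt s i).1.get ⟨n, by simpa using h1⟩ = s.1.get ⟨n, hn.1⟩ := by
    simp only [List.get_eq_getElem]
    show (s.1.take ((i : ℕ) + 1))[n]'_ = _
    exact List.getElem_take
  have e2 : mPrefAt (mPrefAt s i) ⟨n, by simpa using h1⟩ = mPrefAt s ⟨n, hn.1⟩ :=
    Subtype.ext (by
      show (s.1.take ((i : ℕ) + 1)).take (n + 1) = s.1.take (n + 1)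
      rw [List.take_take, min_eq_left (by omega)])
  rw [e1, e2]

/-- A chosen bijection witnessing `gBis (m+1)`. -/
noncomputable def gTheta {m : ℕ} {x : 𝒜.carrier} {y : ℬ.carrier}
    (h : gBis 𝒜 ℬ (m + 1) x y) (α : V.Act) :
    {a' // 𝒜.rel α x a'} ≃ {b' // ℬ.rel α y b'} :=
  ((gBis_succ.mp h).2 α).choose

theorem gTheta_spec {m : ℕ} {x : 𝒜.carrier} {y : ℬ.carrier}
    (h : gBis 𝒜 ℬ (m + 1) x y) (α : V.Act) :
    ∀ a' : {a' // 𝒜.rel α x a'}, gBis 𝒜 ℬ m a'.1 ((gTheta h α) a').1 :=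
  ((gBis_succ.mp h).2 α).choose_spec

open Classical in
noncomputable def fwd (𝒜 ℬ : Kripke V) (m : ℕ) (x : 𝒜.carrier) (y : ℬ.carrier)
    (α : V.Act) (x' : 𝒜.carrier) : ℬ.carrier :=
  if h : gBis 𝒜 ℬ (m + 1) x y ∧ 𝒜.rel α x x' then (gTheta h.1 α ⟨x', h.2⟩).1 else y

open Classical in
noncomputable def bwd (𝒜 ℬ : Kripke V) (m : ℕ) (x : 𝒜.carrier) (y : ℬ.carrier)
    (α : V.Act) (y' : ℬ.carrier) : 𝒜.carrier :=
  if h : gBis 𝒜 ℬ (m + 1) x y ∧ ℬ.rel α y y' then ((gTheta h.1 α).symm ⟨y', h.2⟩).1 else x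

section FwdBwd
variable {m : ℕ} {x : 𝒜.carrier} {y : ℬ.carrier} {α : V.Act}

theorem fwd_eq (h : gBis 𝒜 ℬ (m + 1) x y) {x' : 𝒜.carrier} (hr : 𝒜.rel α x x') :
    fwd 𝒜 ℬ m x y α x' = (gTheta h α ⟨x', hr⟩).1 := by
  rw [fwd, dif_pos (⟨h, hr⟩ : gBis 𝒜 ℬ (m + 1) x y ∧ 𝒜.rel α x x')]

theorem bwd_eq (h : gBis 𝒜 ℬ (m + 1) x y) {y' : ℬ.carrier} (hr : ℬ.rel α y y') :
    bwd 𝒜 ℬ m x y α y' = ((gTheta h α).symm ⟨y', hr⟩).1 := by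
  rw [bwd, dif_pos (⟨h, hr⟩ : gBis 𝒜 ℬ (m + 1) x y ∧ ℬ.rel α y y')]

theorem fwd_rel (h : gBis 𝒜 ℬ (m + 1) x y) {x' : 𝒜.carrier} (hr : 𝒜.rel α x x') :
    ℬ.rel α y (fwd 𝒜 ℬ m x y α x') := by
  rw [fwd_eq h hr]; exact (gTheta h α ⟨x', hr⟩).2

theorem fwd_gBis (h : gBis 𝒜 ℬ (m + 1) x y) {x' : 𝒜.carrier} (hr : 𝒜.rel α x x') :
    gBis 𝒜 ℬ m x' (fwd 𝒜 ℬ m x y α x') := by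
  rw [fwd_eq h hr]; exact gTheta_spec h α ⟨x', hr⟩

theorem bwd_rel (h : gBis 𝒜 ℬ (m + 1) x y) {y' : ℬ.carrier} (hr : ℬ.rel α y y') :
    𝒜.rel α x (bwd 𝒜 ℬ m x y α y') := by
  rw [bwd_eq h hr]; exact ((gTheta h α).symm ⟨y', hr⟩).2

theorem bwd_gBis (h : gBis 𝒜 ℬ (m + 1) x y) {y' : ℬ.carrier} (hr : ℬ.rel α y y') :
    gBis 𝒜 ℬ m (bwd 𝒜 ℬ m x y α y') y' := by
  rw [bwd_eq h hr]
  have := gTheta_spec h α ((gTheta h α).symm ⟨y', hr⟩)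
  rwa [Equiv.apply_symm_apply] at this

theorem bwd_fwd (h : gBis 𝒜 ℬ (m + 1) x y) {x' : 𝒜.carrier} (hr : 𝒜.rel α x x') :
    bwd 𝒜 ℬ m x y α (fwd 𝒜 ℬ m x y α x') = x' := by
  have hr' := fwd_rel h hr
  rw [bwd_eq h hr']
  have e : (⟨fwd 𝒜 ℬ m x y α x', hr'⟩ : {b' // ℬ.rel α y b'}) = gTheta h α ⟨x', hr⟩ :=
    Subtype.ext (fwd_eq h hr)
  rw [e, Equiv.symm_apply_apply]

theorem fwd_bwd (h : gBis 𝒜 ℬ (m + 1) x y) {y' : ℬ.carrier} (hr : ℬ.rel α y y') :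
    fwd 𝒜 ℬ m x y α (bwd 𝒜 ℬ m x y α y') = y' := by
  have hr' := bwd_rel h hr
  rw [fwd_eq h hr']
  have e : (⟨bwd 𝒜 ℬ m x y α y', hr'⟩ : {a' // 𝒜.rel α x a'}) = (gTheta h α).symm ⟨y', hr⟩ :=
    Subtype.ext (bwd_eq h hr)
  rw [e, Equiv.apply_symm_apply]

end FwdBwd

noncomputable def runF (𝒜 ℬ : Kripke V) :
    ℕ → 𝒜.carrier → ℬ.carrier → List (V.Act × 𝒜.carrier) → ℬ.carrier
  | _, _, y, [] => y
  | m, x, y, (α, x') :: l => runF 𝒜 ℬ (m - 1) x' (fwd 𝒜 ℬ (m - 1) x y α x') l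

noncomputable def runG (𝒜 ℬ : Kripke V) :
    ℕ → 𝒜.carrier → ℬ.carrier → List (V.Act × ℬ.carrier) → 𝒜.carrier
  | _, x, _, [] => x
  | m, x, y, (α, y') :: l => runG 𝒜 ℬ (m - 1) (bwd 𝒜 ℬ (m - 1) x y α y') y' l

theorem runF_snoc (l : List (V.Act × 𝒜.carrier)) :
    ∀ (m : ℕ) (x : 𝒜.carrier) (y : ℬ.carrier) (α : V.Act) (x' : 𝒜.carrier),
      runF 𝒜 ℬ m x y (l ++ [(α, x')]) =
        fwd 𝒜 ℬ (m - l.length - 1) (lastFrom 𝒜 x l) (runF 𝒜 ℬ m x y l) α x' := by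
  induction l with
  | nil => intro m x y α x'; simp [runF, lastFrom]
  | cons p l ih =>
    intro m x y α x'
    obtain ⟨β, z⟩ := p
    simp only [List.cons_append, runF, List.append_eq, lastFrom, ih, List.length_cons]
    rw [show m - 1 - l.length - 1 = m - (l.length + 1) - 1 by omega]

theorem runG_snoc (l : List (V.Act × ℬ.carrier)) :
    ∀ (m : ℕ) (x : 𝒜.carrier) (y : ℬ.carrier) (α : V.Act) (y' : ℬ.carrier),
      runG 𝒜 ℬ m x y (l ++ [(α, y')]) =
        bwd 𝒜 ℬ (m - l.length - 1) (runG 𝒜 ℬ m x y l) (lastFrom ℬ y l) α y' := by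
  induction l with
  | nil => intro m x y α y'; simp [runG, lastFrom]
  | cons p l ih =>
    intro m x y α y'
    obtain ⟨β, z⟩ := p
    simp only [List.cons_append, runG, List.append_eq, lastFrom, ih, List.length_cons]
    rw [show m - 1 - l.length - 1 = m - (l.length + 1) - 1 by omega]

theorem runF_gBis (l : List (V.Act × 𝒜.carrier)) :
    ∀ (m : ℕ) (x : 𝒜.carrier) (y : ℬ.carrier), gBis 𝒜 ℬ m x y → chainFrom 𝒜 x l →
      l.length ≤ m → gBis 𝒜 ℬ (m - l.length) (lastFrom 𝒜 x l) (runF 𝒜 ℬ m x y l) := by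
  induction l with
  | nil => intro m x y h _ _; simpa [runF, lastFrom] using h
  | cons p l ih =>
    intro m x y h hc hl
    obtain ⟨α, x'⟩ := p
    simp only [List.length_cons] at hl
    have hm : gBis 𝒜 ℬ (m - 1 + 1) x y := by
      rw [show m - 1 + 1 = m by omega]; exact h
    have hb := fwd_gBis hm hc.1
    have := ih (m - 1) x' _ hb hc.2 (by omega)
    rw [show m - 1 - l.length = m - (l.length + 1) by omega] at this
    simpa [runF, lastFrom] using this

theorem runG_gBis (l : List (V.Act × ℬ.carrier)) :
    ∀ (m : ℕ) (x : 𝒜.carrier) (y : ℬ.carrier), gBis 𝒜 ℬ m x y → chainFrom ℬ y l →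
      l.length ≤ m → gBis 𝒜 ℬ (m - l.length) (runG 𝒜 ℬ m x y l) (lastFrom ℬ y l) := by
  induction l with
  | nil => intro m x y h _ _; simpa [runG, lastFrom] using h
  | cons p l ih =>
    intro m x y h hc hl
    obtain ⟨α, y'⟩ := p
    simp only [List.length_cons] at hl
    have hm : gBis 𝒜 ℬ (m - 1 + 1) x y := by
      rw [show m - 1 + 1 = m by omega]; exact h
    have hb := bwd_gBis hm hc.1
    have := ih (m - 1) _ y' hb hc.2 (by omega)
    rw [show m - 1 - l.length = m - (l.length + 1) by omega] at this
    simpa [runG, lastFrom] using this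

theorem G_of_Fsnoc {a : 𝒜.carrier} {b : ℬ.carrier} {k : ℕ}
    {f : MkC 𝒜 a k → ℬ.carrier} {g : MkC ℬ b k → 𝒜.carrier}
    {F : MkC 𝒜 a k → MkC ℬ b k} {G : MkC ℬ b k → MkC 𝒜 a k}
    (hF : IsMCoext f F) (hG : IsMCoext g G) (hgF : ∀ s, g (F s) = meps s)
    (s : MkC 𝒜 a k) (t : MkC ℬ b k) (α : V.Act) (b' : ℬ.carrier)
    (ht : t.1 = (F s).1 ++ [(α, b')]) :
    (G t).1 = s.1 ++ [(α, g t)] := by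
  have hF' : ∀ s, (F s).1 = coextList f s := hF
  have hG' : ∀ t, (G t).1 = coextList g t := hG
  have hlF := mcoext_length hF s
  have hlt : t.1.length = s.1.length + 1 := by rw [ht]; simp [hlF]
  rw [hG' t]
  apply List.ext_getElem (by simp [hlt])
  intro n h1 h2
  have h1' : n < t.1.length := by simpa using h1
  simp only [coextList, List.getElem_ofFn]
  by_cases hn : n < s.1.length
  · rw [List.getElem_append_left hn]
    have hfin : n < (F s).1.length := by omega
    have e1 : t.1.get ⟨n, h1'⟩ = ((s.1.get ⟨n, hn⟩).1, f (mPrefAt s ⟨n, hn⟩)) := by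
      simp only [List.get_eq_getElem]
      rw [List.getElem_of_eq ht, List.getElem_append_left hfin,
        List.getElem_of_eq (hF' s)]
      simp only [coextList, List.getElem_ofFn]
      simp [List.get_eq_getElem]
    have e2 : mPrefAt t ⟨n, h1'⟩ = F (mPrefAt s ⟨n, hn⟩) := Subtype.ext (by
      show t.1.take (n + 1) = (F (mPrefAt s ⟨n, hn⟩)).1
      rw [hF' (mPrefAt s ⟨n, hn⟩), coextList_pref f s ⟨n, hn⟩,
        ht, List.take_append_of_le_length (by omega), hF' s])
    rw [e1, e2, hgF (mPrefAt s ⟨n, hn⟩)]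
    show (_, lastFrom 𝒜 a (s.1.take (n + 1))) = _
    rw [lastFrom_take' s.1 a n hn]
    simp [List.get_eq_getElem]
  · have hn' : n = s.1.length := by omega
    subst hn'
    rw [List.getElem_concat_length rfl]
    have e1 : t.1.get ⟨s.1.length, h1'⟩ = (α, b') := by
      simp only [List.get_eq_getElem]
      rw [List.getElem_of_eq ht]
      exact List.getElem_concat_length hlF.symm _
    have e2 : mPrefAt t ⟨s.1.length, h1'⟩ = t := Subtype.ext (by
      show t.1.take (s.1.length + 1) = t.1
      rw [← hlt, List.take_length])
    rw [e1, e2]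

theorem stmt17_forward {a : 𝒜.carrier} {b : ℬ.carrier} {k : ℕ} (h : gBis 𝒜 ℬ k a b) :
    (∃ (f : MkC 𝒜 a k → ℬ.carrier) (g : MkC ℬ b k → 𝒜.carrier)
      (F : MkC 𝒜 a k → MkC ℬ b k) (G : MkC ℬ b k → MkC 𝒜 a k),
      IsPKHom (MkS 𝒜 a k) (mpt 𝒜 a k) ℬ b f ∧
      IsPKHom (MkS ℬ b k) (mpt ℬ b k) 𝒜 a g ∧
      IsMCoext f F ∧ IsMCoext g G ∧
      (∀ s, g (F s) = meps s) ∧ (∀ t, f (G t) = meps t)) := by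
  have finv : ∀ s : MkC 𝒜 a k, gBis 𝒜 ℬ (k - s.1.length) (meps s) (runF 𝒜 ℬ k a b s.1) :=
    fun s => runF_gBis s.1 k a b h s.2.2 s.2.1
  have ginv : ∀ t : MkC ℬ b k, gBis 𝒜 ℬ (k - t.1.length) (runG 𝒜 ℬ k a b t.1) (meps t) :=
    fun t => runG_gBis t.1 k a b h t.2.2 t.2.1
  have hfhom : IsPKHom (MkS 𝒜 a k) (mpt 𝒜 a k) ℬ b (fun s => runF 𝒜 ℬ k a b s.1) := by
    refine ⟨⟨fun P s hP => ?_, fun α s t ht => ?_⟩, rfl⟩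
    · exact (gBis_unary (finv s) P).mp hP
    · obtain ⟨x', hx'⟩ := ht
      have hlen : s.1.length < k := by
        have := t.2.1; rw [hx'] at this; simp at this; omega
      have hrel : 𝒜.rel α (meps s) x' := ((chainFrom_append' _ _ _ _).mp (hx' ▸ t.2.2)).2
      have h1 : gBis 𝒜 ℬ (k - s.1.length - 1 + 1) (meps s) (runF 𝒜 ℬ k a b s.1) := by
        rw [show k - s.1.length - 1 + 1 = k - s.1.length by omega]; exact finv s
      show ℬ.rel α (runF 𝒜 ℬ k a b s.1) (runF 𝒜 ℬ k a b t.1)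
      rw [hx', runF_snoc]
      exact fwd_rel h1 hrel
  have hghom : IsPKHom (MkS ℬ b k) (mpt ℬ b k) 𝒜 a (fun t => runG 𝒜 ℬ k a b t.1) := by
    refine ⟨⟨fun P t hP => ?_, fun α t t' ht => ?_⟩, rfl⟩
    · exact (gBis_unary (ginv t) P).mpr hP
    · obtain ⟨y', hy'⟩ := ht
      have hlen : t.1.length < k := by
        have := t'.2.1; rw [hy'] at this; simp at this; omega
      have hrel : ℬ.rel α (meps t) y' := ((chainFrom_append' _ _ _ _).mp (hy' ▸ t'.2.2)).2
      have h1 : gBis 𝒜 ℬ (k - t.1.length - 1 + 1) (runG 𝒜 ℬ k a b t.1) (meps t) := by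
        rw [show k - t.1.length - 1 + 1 = k - t.1.length by omega]; exact ginv t
      show 𝒜.rel α (runG 𝒜 ℬ k a b t.1) (runG 𝒜 ℬ k a b t'.1)
      rw [hy', runG_snoc]
      exact bwd_rel h1 hrel
  have key1 : ∀ (n : ℕ) (s : MkC 𝒜 a k), s.1.length = n →
      runG 𝒜 ℬ k a b (coextList (fun s => runF 𝒜 ℬ k a b s.1) s) = meps s := by
    intro n
    induction n with
    | zero =>
      intro s hs
      have hnil : s.1 = [] := List.length_eq_zero_iff.mp hs
      rw [coextList_nil _ s hnil]
      show a = lastFrom 𝒜 a s.1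
      rw [hnil]; rfl
    | succ n ih =>
      intro s hs
      obtain ⟨s', α, x', hL, hlen'⟩ := msnoc_elim s (by intro hh; rw [hh] at hs; simp at hs)
      have hlenk : s'.1.length < k := by
        have := s.2.1; omega
      have hrel : 𝒜.rel α (meps s') x' := ((chainFrom_append' _ _ _ _).mp (hL ▸ s.2.2)).2
      have h1 : gBis 𝒜 ℬ (k - s'.1.length - 1 + 1) (meps s') (runF 𝒜 ℬ k a b s'.1) := by
        rw [show k - s'.1.length - 1 + 1 = k - s'.1.length by omega]; exact finv s'
      rw [coextList_snoc _ s' s α x' hL, runG_snoc, coextList_length]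
      rw [ih s' (by omega), coext_last' _ hfhom.2 s']
      have hsn : runF 𝒜 ℬ k a b s.1 =
          fwd 𝒜 ℬ (k - s'.1.length - 1) (meps s') (runF 𝒜 ℬ k a b s'.1) α x' := by
        rw [hL, runF_snoc]; rfl
      show bwd 𝒜 ℬ (k - s'.1.length - 1) (meps s') (runF 𝒜 ℬ k a b s'.1) α
          (runF 𝒜 ℬ k a b s.1) = meps s
      rw [hsn, bwd_fwd h1 hrel]
      show x' = lastFrom 𝒜 a s.1
      rw [hL, lastFrom_append']
  have key2 : ∀ (n : ℕ) (t : MkC ℬ b k), t.1.length = n →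
      runF 𝒜 ℬ k a b (coextList (fun t => runG 𝒜 ℬ k a b t.1) t) = meps t := by
    intro n
    induction n with
    | zero =>
      intro t ht
      have hnil : t.1 = [] := List.length_eq_zero_iff.mp ht
      rw [coextList_nil _ t hnil]
      show b = lastFrom ℬ b t.1
      rw [hnil]; rfl
    | succ n ih =>
      intro t ht
      obtain ⟨t', β, y', hL, hlen'⟩ := msnoc_elim t (by intro hh; rw [hh] at ht; simp at ht)
      have hlenk : t'.1.length < k := by
        have := t.2.1; omega
      have hrel : ℬ.rel β (meps t') y' := ((chainFrom_append' _ _ _ _).mp (hL ▸ t.2.2)).2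
      have h1 : gBis 𝒜 ℬ (k - t'.1.length - 1 + 1) (runG 𝒜 ℬ k a b t'.1) (meps t') := by
        rw [show k - t'.1.length - 1 + 1 = k - t'.1.length by omega]; exact ginv t'
      rw [coextList_snoc _ t' t β y' hL, runF_snoc, coextList_length]
      rw [ih t' (by omega), coext_last' _ hghom.2 t']
      have hgn : runG 𝒜 ℬ k a b t.1 =
          bwd 𝒜 ℬ (k - t'.1.length - 1) (runG 𝒜 ℬ k a b t'.1) (meps t') β y' := by
        rw [hL, runG_snoc]; rfl
      show fwd 𝒜 ℬ (k - t'.1.length - 1) (runG 𝒜 ℬ k a b t'.1) (meps t') β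
          (runG 𝒜 ℬ k a b t.1) = meps t
      rw [hgn, fwd_bwd h1 hrel]
      show y' = lastFrom ℬ b t.1
      rw [hL, lastFrom_append']
  exact ⟨_, _, coextF _ hfhom, coextF _ hghom, hfhom, hghom,
    coextF_isMCoext _ hfhom, coextF_isMCoext _ hghom,
    fun s => key1 s.1.length s rfl, fun t => key2 t.1.length t rfl⟩

theorem stmt17_backward {a : 𝒜.carrier} {b : ℬ.carrier} {k : ℕ}
    {f : MkC 𝒜 a k → ℬ.carrier} {g : MkC ℬ b k → 𝒜.carrier}
    {F : MkC 𝒜 a k → MkC ℬ b k} {G : MkC ℬ b k → MkC 𝒜 a k}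
    (hf : IsPKHom (MkS 𝒜 a k) (mpt 𝒜 a k) ℬ b f)
    (hg : IsPKHom (MkS ℬ b k) (mpt ℬ b k) 𝒜 a g)
    (hF : IsMCoext f F) (hG : IsMCoext g G)
    (hgF : ∀ s, g (F s) = meps s) (hfG : ∀ t, f (G t) = meps t) :
    gBis 𝒜 ℬ k a b := by
  have unary : ∀ (s : MkC 𝒜 a k) (P), 𝒜.unary P (meps s) ↔ ℬ.unary P (f s) := by
    intro s P
    constructor
    · exact fun hP => hf.1.1 P s hP
    · intro hP
      have h1 : (MkS ℬ b k).unary P (F s) := by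
        show ℬ.unary P (meps (F s)); rw [mcoext_meps hF hf.2 s]; exact hP
      have := hg.1.1 P (F s) h1
      rwa [hgF s] at this
  have main : ∀ (m : ℕ) (s : MkC 𝒜 a k), s.1.length + m ≤ k → gBis 𝒜 ℬ m (meps s) (f s) := by
    intro m
    induction m with
    | zero => exact fun s _ => unary s
    | succ m ih =>
      intro s hs
      rw [gBis_succ]
      refine ⟨unary s, fun α => ?_⟩
      have hlt : s.1.length < k := by omega
      have hltF : (F s).1.length < k := by rw [mcoext_length hF]; exact hlt
      have hepsF := mcoext_meps hF hf.2 s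
      refine ⟨⟨fun a' => ⟨f (msnoc s α a'.1 hlt a'.2),
          hf.1.2 α s _ (rel_msnoc s α a'.1 hlt a'.2)⟩,
        fun b' => ⟨g (msnoc (F s) α b'.1 hltF (by rw [hepsF]; exact b'.2)), by
          have := hg.1.2 α (F s) _ (rel_msnoc (F s) α b'.1 hltF (by rw [hepsF]; exact b'.2))
          rwa [hgF s] at this⟩, ?_, ?_⟩, ?_⟩
      · -- left inverse
        intro a'
        apply Subtype.ext
        have key : ∀ (p1 : s.1.length < k) (p2 : 𝒜.rel α (meps s) a'.1)
            (p3 : (F s).1.length < k)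
            (p4 : ℬ.rel α (meps (F s)) (f (msnoc s α a'.1 p1 p2))),
            g (msnoc (F s) α (f (msnoc s α a'.1 p1 p2)) p3 p4) = a'.1 := by
          intro p1 p2 p3 p4
          have e : msnoc (F s) α (f (msnoc s α a'.1 p1 p2)) p3 p4 =
              F (msnoc s α a'.1 p1 p2) :=
            Subtype.ext (mcoext_snoc hF s _ α a'.1 rfl).symm
          rw [e, hgF]
          exact meps_msnoc s α a'.1 p1 p2
        exact key hlt a'.2 hltF _
      · -- right inverse
        intro b'
        apply Subtype.ext
        have key : ∀ (p1 : (F s).1.length < k) (p2 : ℬ.rel α (meps (F s)) b'.1)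
            (p3 : s.1.length < k)
            (p4 : 𝒜.rel α (meps s) (g (msnoc (F s) α b'.1 p1 p2))),
            f (msnoc s α (g (msnoc (F s) α b'.1 p1 p2)) p3 p4) = b'.1 := by
          intro p1 p2 p3 p4
          have hGT := G_of_Fsnoc hF hG hgF s (msnoc (F s) α b'.1 p1 p2) α b'.1 rfl
          have e : msnoc s α (g (msnoc (F s) α b'.1 p1 p2)) p3 p4 =
              G (msnoc (F s) α b'.1 p1 p2) :=
            Subtype.ext hGT.symm
          rw [e, hfG]
          exact meps_msnoc (F s) α b'.1 p1 p2
        exact key hltF _ hlt _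
      · -- bisimulation property
        intro a'
        have := ih (msnoc s α a'.1 hlt a'.2)
          (by simp only [msnoc_val, List.length_append, List.length_singleton]; omega)
        rwa [meps_msnoc] at this
  have hmain := main k (mpt 𝒜 a k) (by simp [mpt])
  rwa [hf.2] at hmain

end Stmt17Aux

/-- `a ∼^g_k b` iff `(𝒜,a)` and `(ℬ,b)` are isomorphic in the coKleisli category of the
modal comonad `M_k`. -/
theorem stmt17 (V : ModalVocab) (𝒜 ℬ : Kripke V) (a : 𝒜.carrier) (b : ℬ.carrier)
    (k : ℕ) :
    gBis 𝒜 ℬ k a b ↔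
    (∃ (f : MkC 𝒜 a k → ℬ.carrier) (g : MkC ℬ b k → 𝒜.carrier)
      (F : MkC 𝒜 a k → MkC ℬ b k) (G : MkC ℬ b k → MkC 𝒜 a k),
      IsPKHom (MkS 𝒜 a k) (mpt 𝒜 a k) ℬ b f ∧
      IsPKHom (MkS ℬ b k) (mpt ℬ b k) 𝒜 a g ∧
      IsMCoext f F ∧ IsMCoext g G ∧
      (∀ s, g (F s) = meps s) ∧ (∀ t, f (G t) = meps t)) := by
  constructor
  · exact stmt17_forward
  · rintro ⟨f, g, F, G, hf, hg, hF, hG, hgF, hfG⟩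
    exact stmt17_backward hf hg hF hG hgF hfG
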